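/- Let H be an n×n symmetric positive definite matrix and let X = (X_t)_{t∈ℤ} be an n-dimensional process such that e^{tH} X_t → 0 in probability as t → −∞ and such that Δ_t X = (e^{−H} − I) X_{t−1} + Δ_t G for all t ∈ ℤ, where G ∈ 𝒢_H and Δ_t X = X_t − X_{t−1}, Δ_t G = G_t − G_{t−1}. Then X is strictly stationary. -/

import Mathlib

set_option autoImplicit false

open MeasureTheory Filter Finset Matrix Topology
open scoped NNReal ENNReal

set_option maxHeartbeats 2000000

variable {Ω : Type*}

/-- Two `ℤ`-indexed `ℝⁿ`-valued processes have the same finite-dimensional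
distributions. -/
def SameFDD {n : ℕ} [MeasurableSpace Ω] (μ : Measure Ω)
    (X Y : ℤ → Ω → (Fin n → ℝ)) : Prop :=
  ∀ (m : ℕ) (t : Fin m → ℤ),
    μ.map (fun ω (i : Fin m) => X (t i) ω) = μ.map (fun ω (i : Fin m) => Y (t i) ω)

/-- Strict stationarity of a `ℤ`-indexed process. -/
def IsStationaryProcess {n : ℕ} [MeasurableSpace Ω] (μ : Measure Ω)
    (X : ℤ → Ω → (Fin n → ℝ)) : Prop :=
  ∀ s : ℤ, SameFDD μ (fun t => X (t + s)) X

/-- Stationarity of increments of a `ℤ`-indexed process. -/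
def HasStationaryIncrements {n : ℕ} [MeasurableSpace Ω] (μ : Measure Ω)
    (G : ℤ → Ω → (Fin n → ℝ)) : Prop :=
  ∀ s : ℤ, SameFDD μ (fun t ω => G (t + s) ω - G s ω) (fun t ω => G t ω - G 0 ω)

/-- The matrix exponential `e^{tH}` for an integer `t`. -/
noncomputable def zexp {n : ℕ} (H : Matrix (Fin n) (Fin n) ℝ) (t : ℤ) :
    Matrix (Fin n) (Fin n) ℝ :=
  NormedSpace.exp ((t : ℝ) • H)

/-- The partial sum `Σ_{k=l}^0 e^{kH} Δ_k G`. -/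
noncomputable def partialSumG {n : ℕ} (H : Matrix (Fin n) (Fin n) ℝ)
    (G : ℤ → Ω → (Fin n → ℝ)) (l : ℤ) (ω : Ω) : Fin n → ℝ :=
  ∑ k ∈ Finset.Icc l 0, (zexp H k).mulVec (G k ω - G (k - 1) ω)

/-- `G ∈ 𝒢_H` : `G` is a stationary-increment process starting from `0` whose partial
sums `Σ_{k=l}^0 e^{kH} Δ_k G` converge in probability as `l → −∞`. -/
def MemG {n : ℕ} [MeasurableSpace Ω] (μ : Measure Ω) (H : Matrix (Fin n) (Fin n) ℝ)
    (G : ℤ → Ω → (Fin n → ℝ)) : Prop :=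
  (∀ ω, G 0 ω = 0) ∧ HasStationaryIncrements μ G ∧
    ∃ ξ : Ω → (Fin n → ℝ), TendstoInMeasure μ (fun l => partialSumG H G l) Filter.atBot ξ

/-! ### Auxiliary lemmas -/

lemma zexp_add {n : ℕ} (H : Matrix (Fin n) (Fin n) ℝ) (a b : ℤ) :
    zexp H (a + b) = zexp H a * zexp H b := by
  unfold zexp
  rw [show ((a + b : ℤ) : ℝ) • H = (a : ℝ) • H + (b : ℝ) • H by push_cast; rw [add_smul]]
  exact Matrix.exp_add_of_commute _ _ (((Commute.refl H).smul_left _).smul_right _)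

lemma zexp_zero {n : ℕ} (H : Matrix (Fin n) (Fin n) ℝ) : zexp H 0 = 1 := by
  unfold zexp; simp [NormedSpace.exp_zero]

lemma continuous_mulVec' {n : ℕ} (M : Matrix (Fin n) (Fin n) ℝ) :
    Continuous fun v : Fin n → ℝ => M.mulVec v := by
  have : (fun v : Fin n → ℝ => M.mulVec v) = ⇑M.mulVecLin := by
    ext v i; simp [Matrix.mulVecLin_apply]
  rw [this]
  exact M.mulVecLin.continuous_of_finiteDimensional

lemma exists_mulVec_bound {n : ℕ} (M : Matrix (Fin n) (Fin n) ℝ) :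
    ∃ C : ℝ, 0 ≤ C ∧ ∀ v, ‖M.mulVec v‖ ≤ C * ‖v‖ := by
  refine ⟨‖LinearMap.toContinuousLinearMap M.mulVecLin‖, norm_nonneg _, fun v => ?_⟩
  have h := (LinearMap.toContinuousLinearMap M.mulVecLin).le_opNorm v
  simpa [Matrix.mulVecLin_apply] using h

lemma mulVec_finset_sum {n : ℕ} {ι : Type*} (M : Matrix (Fin n) (Fin n) ℝ) (s : Finset ι)
    (f : ι → (Fin n → ℝ)) : M.mulVec (∑ k ∈ s, f k) = ∑ k ∈ s, M.mulVec (f k) := by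
  simp only [← Matrix.mulVecLin_apply]
  exact map_sum _ _ _

lemma tendstoInMeasure_comp {α E ι κ : Type*} {_ : MeasurableSpace α} {μ : Measure α}
    [EDist E] {f : ι → α → E} {g : α → E} {L : Filter ι} {L' : Filter κ} {u : κ → ι}
    (h : TendstoInMeasure μ f L g) (hu : Tendsto u L' L) :
    TendstoInMeasure μ (fun k => f (u k)) L' g :=
  fun ε hε => (h ε hε).comp hu

lemma tendstoInMeasure_pi {α ι κ E : Type*} {_ : MeasurableSpace α} {μ : Measure α}
    [Fintype κ] [PseudoMetricSpace E] {f : ι → α → κ → E} {g : α → κ → E} {L : Filter ι}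
    (h : ∀ j : κ, TendstoInMeasure μ (fun i ω => f i ω j) L (fun ω => g ω j)) :
    TendstoInMeasure μ f L g := by
  rw [tendstoInMeasure_iff_dist]
  simp_rw [tendstoInMeasure_iff_dist] at h
  intro ε hε
  have hsum : Tendsto (fun i => ∑ j : κ, μ { ω | ε ≤ dist (f i ω j) (g ω j) }) L (𝓝 0) := by
    have := tendsto_finset_sum Finset.univ (fun (j : κ) (_ : j ∈ Finset.univ) => h j ε hε)
    simpa using this
  refine tendsto_of_tendsto_of_tendsto_of_le_of_le tendsto_const_nhds hsum
    (fun i => zero_le) (fun i => ?_)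
  have hsub : { ω | ε ≤ dist (f i ω) (g ω) } ⊆
      ⋃ j : κ, { ω | ε ≤ dist (f i ω j) (g ω j) } := by
    intro ω hω
    by_contra hc
    simp only [Set.mem_iUnion, Set.mem_setOf_eq, not_exists, not_le] at hc
    have hlt : dist (f i ω) (g ω) < ε := by
      rw [dist_pi_lt_iff hε]; exact hc
    exact absurd hω (not_le.mpr hlt)
  calc μ { ω | ε ≤ dist (f i ω) (g ω) }
      ≤ μ (⋃ j : κ, { ω | ε ≤ dist (f i ω j) (g ω j) }) := measure_mono hsub
    _ ≤ ∑' j : κ, μ { ω | ε ≤ dist (f i ω j) (g ω j) } := measure_iUnion_le _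
    _ = ∑ j : κ, μ { ω | ε ≤ dist (f i ω j) (g ω j) } := tsum_fintype _

lemma tendstoInMeasure_of_dist_le {α ι E E' : Type*} {_ : MeasurableSpace α} {μ : Measure α}
    [PseudoMetricSpace E] [PseudoMetricSpace E'] {f : ι → α → E} {F : α → E}
    {g : ι → α → E'} {Gg : α → E'} {L : Filter ι} {C : ℝ} (hC : 0 ≤ C)
    (hbound : ∀ᶠ i in L, ∀ ω, dist (f i ω) (F ω) ≤ C * dist (g i ω) (Gg ω))
    (hg : TendstoInMeasure μ g L Gg) : TendstoInMeasure μ f L F := by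
  rw [tendstoInMeasure_iff_dist] at hg ⊢
  intro ε hε
  have hδ : 0 < ε / (C + 1) := by positivity
  refine tendsto_of_tendsto_of_tendsto_of_le_of_le' tendsto_const_nhds (hg _ hδ)
    (Eventually.of_forall fun i => zero_le) ?_
  filter_upwards [hbound] with i hi
  refine measure_mono fun ω hω => ?_
  simp only [Set.mem_setOf_eq] at hω ⊢
  by_contra hcon
  push_neg at hcon
  have h1 : C * dist (g i ω) (Gg ω) ≤ C * (ε / (C + 1)) :=
    mul_le_mul_of_nonneg_left hcon.le hC
  have h2 : C * (ε / (C + 1)) < ε := by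
    rw [mul_comm, div_mul_eq_mul_div, div_lt_iff₀ (by positivity)]
    nlinarith
  linarith [hi ω]

lemma map_eq_of_tendstoInMeasure {α E : Type*} {_ : MeasurableSpace α} {μ : Measure α}
    [IsProbabilityMeasure μ] [MeasurableSpace E] [MetricSpace E] [BorelSpace E]
    {f g : ℕ → α → E} {F Gg : α → E}
    (hf : ∀ j, AEMeasurable (f j) μ) (hg : ∀ j, AEMeasurable (g j) μ)
    (hF : AEMeasurable F μ) (hGg : AEMeasurable Gg μ)
    (hlaw : ∀ j, μ.map (f j) = μ.map (g j))
    (h1 : TendstoInMeasure μ f atTop F) (h2 : TendstoInMeasure μ g atTop Gg) :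
    μ.map F = μ.map Gg := by
  obtain ⟨ns, hns_mono, hns⟩ := h1.exists_seq_tendsto_ae
  have h2' : TendstoInMeasure μ (fun j => g (ns j)) atTop Gg :=
    fun ε hε => (h2 ε hε).comp hns_mono.tendsto_atTop
  obtain ⟨ms, hms_mono, hms⟩ := h2'.exists_seq_tendsto_ae
  set φ : ℕ → ℕ := fun j => ns (ms j) with hφ
  have hfae : ∀ᵐ ω ∂μ, Tendsto (fun j => f (φ j) ω) atTop (𝓝 (F ω)) := by
    filter_upwards [hns] with ω hω
    exact hω.comp hms_mono.tendsto_atTop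
  have hgae : ∀ᵐ ω ∂μ, Tendsto (fun j => g (φ j) ω) atTop (𝓝 (Gg ω)) := hms
  haveI : IsProbabilityMeasure (μ.map F) := Measure.isProbabilityMeasure_map hF
  haveI : IsProbabilityMeasure (μ.map Gg) := Measure.isProbabilityMeasure_map hGg
  refine ext_of_forall_lintegral_eq_of_IsFiniteMeasure fun ψ => ?_
  have key : ∀ (h : ℕ → α → E) (Hh : α → E), (∀ j, AEMeasurable (h j) μ) →
      (∀ᵐ ω ∂μ, Tendsto (fun j => h j ω) atTop (𝓝 (Hh ω))) →
      Tendsto (fun j => ∫⁻ ω, (ψ (h j ω) : ℝ≥0∞) ∂μ) atTop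
        (𝓝 (∫⁻ ω, (ψ (Hh ω) : ℝ≥0∞) ∂μ)) := by
    intro h Hh hmeas hae
    refine tendsto_lintegral_of_dominated_convergence' (fun _ => ((nndist ψ 0 : ℝ≥0) : ℝ≥0∞))
      (fun j => ?_) (fun j => Eventually.of_forall fun ω => ?_) ?_ ?_
    · exact (measurable_coe_nnreal_ennreal.comp
        (map_continuous ψ).measurable).comp_aemeasurable (hmeas j)
    · exact ENNReal.coe_le_coe.mpr (BoundedContinuousFunction.NNReal.upper_bound ψ _)
    · rw [lintegral_const]
      exact ENNReal.mul_ne_top ENNReal.coe_ne_top (measure_ne_top μ _)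
    · filter_upwards [hae] with ω hω
      exact ENNReal.tendsto_coe.mpr (((map_continuous ψ).tendsto _).comp hω)
  have heqj : ∀ j, ∫⁻ ω, (ψ (f (φ j) ω) : ℝ≥0∞) ∂μ = ∫⁻ ω, (ψ (g (φ j) ω) : ℝ≥0∞) ∂μ := by
    intro j
    have hψ : AEMeasurable (fun x : E => (ψ x : ℝ≥0∞)) (μ.map (f (φ j))) :=
      (measurable_coe_nnreal_ennreal.comp (map_continuous ψ).measurable).aemeasurable
    have hψ' : AEMeasurable (fun x : E => (ψ x : ℝ≥0∞)) (μ.map (g (φ j))) :=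
      (measurable_coe_nnreal_ennreal.comp (map_continuous ψ).measurable).aemeasurable
    rw [← lintegral_map' hψ (hf (φ j)), ← lintegral_map' hψ' (hg (φ j)), hlaw (φ j)]
  have hFlim := key (fun j => f (φ j)) F (fun j => hf _) hfae
  have hGlim := key (fun j => g (φ j)) Gg (fun j => hg _) hgae
  have hFG : ∫⁻ ω, (ψ (F ω) : ℝ≥0∞) ∂μ = ∫⁻ ω, (ψ (Gg ω) : ℝ≥0∞) ∂μ :=
    tendsto_nhds_unique (hFlim.congr heqj) hGlim
  have hψm : Measurable (fun x : E => ((ψ x : ℝ≥0) : ℝ≥0∞)) :=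
    measurable_coe_nnreal_ennreal.comp (map_continuous ψ).measurable
  rw [lintegral_map' hψm.aemeasurable hF, lintegral_map' hψm.aemeasurable hGg]
  exact hFG

/-- The candidate stationary representation `Y_l(u) = e^{-uH} Σ_{k=l}^u e^{kH} Δ_k G`. -/
noncomputable def Yproc {Ω : Type*} {n : ℕ} (H : Matrix (Fin n) (Fin n) ℝ)
    (G : ℤ → Ω → (Fin n → ℝ)) (l u : ℤ) (ω : Ω) : Fin n → ℝ :=
  (zexp H (-u)).mulVec (∑ k ∈ Finset.Icc l u, (zexp H k).mulVec (G k ω - G (k - 1) ω))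

lemma Yproc_shift {Ω : Type*} {n : ℕ} (H : Matrix (Fin n) (Fin n) ℝ)
    (G : ℤ → Ω → (Fin n → ℝ)) (l u s : ℤ) (ω : Ω) :
    Yproc H G (l + s) (u + s) ω =
      (zexp H (-u)).mulVec (∑ k ∈ Finset.Icc l u,
        (zexp H k).mulVec (G (k + s) ω - G (k + s - 1) ω)) := by
  unfold Yproc
  rw [← Finset.map_add_right_Icc, Finset.sum_map]
  simp only [addRightEmbedding_apply]
  calc (zexp H (-(u + s))).mulVec (∑ k ∈ Finset.Icc l u,
        (zexp H (k + s)).mulVec (G (k + s) ω - G (k + s - 1) ω))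
      = (zexp H (-(u + s))).mulVec (∑ k ∈ Finset.Icc l u,
        (zexp H s).mulVec ((zexp H k).mulVec (G (k + s) ω - G (k + s - 1) ω))) := by
        refine congrArg _ (Finset.sum_congr rfl fun k _ => ?_)
        rw [Matrix.mulVec_mulVec, ← zexp_add, show k + s = s + k from add_comm k s]
    _ = (zexp H (-(u + s))).mulVec ((zexp H s).mulVec (∑ k ∈ Finset.Icc l u,
        (zexp H k).mulVec (G (k + s) ω - G (k + s - 1) ω))) := by
        exact congrArg _ (mulVec_finset_sum _ _ _).symm
    _ = (zexp H (-u)).mulVec (∑ k ∈ Finset.Icc l u,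
        (zexp H k).mulVec (G (k + s) ω - G (k + s - 1) ω)) := by
        rw [Matrix.mulVec_mulVec, ← zexp_add, show -(u + s) + s = -u from by ring]

/-- if `e^{tH} X_t → 0` in probability as `t → −∞` and
`Δ_t X = (e^{−H} − I) X_{t−1} + Δ_t G` for all `t ∈ ℤ` with `G ∈ 𝒢_H`,
then `X` is strictly stationary. -/
theorem stmt4 {n : ℕ} [MeasurableSpace Ω] (μ : Measure Ω) [IsProbabilityMeasure μ]
    (H : Matrix (Fin n) (Fin n) ℝ) (hH : H.PosDef)
    (X G : ℤ → Ω → (Fin n → ℝ))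
    (hmX : ∀ t, Measurable (X t)) (hmG : ∀ t, Measurable (G t))
    (hG : MemG μ H G)
    (hlim : TendstoInMeasure μ (fun t ω => (zexp H t).mulVec (X t ω)) Filter.atBot
      (fun _ => (0 : Fin n → ℝ)))
    (heq : ∀ (t : ℤ) (ω : Ω), X t ω - X (t - 1) ω =
      (NormedSpace.exp (-H) - 1).mulVec (X (t - 1) ω) + (G t ω - G (t - 1) ω)) :
    IsStationaryProcess μ X := by
  obtain ⟨hG0, hGinc, -⟩ := hG
  intro s m t
  rcases Nat.eq_zero_or_pos m with hm | hm
  · subst hm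
    show μ.map (fun ω (i : Fin 0) => X (t i + s) ω) = μ.map (fun ω (i : Fin 0) => X (t i) ω)
    have h0 : (fun ω (i : Fin 0) => X (t i + s) ω) = (fun ω (i : Fin 0) => X (t i) ω) :=
      funext fun ω => funext fun i => i.elim0
    exact congrArg (fun f : Ω → (Fin 0 → Fin n → ℝ) => μ.map f) h0
  haveI : Nonempty (Fin m) := ⟨⟨0, hm⟩⟩
  -- telescoping identity
  have tele : ∀ (l u : ℤ), l - 1 ≤ u → ∀ ω,
      (zexp H u).mulVec (X u ω) =
        (zexp H (l - 1)).mulVec (X (l - 1) ω)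
          + ∑ k ∈ Finset.Icc l u, (zexp H k).mulVec (G k ω - G (k - 1) ω) := by
    intro l
    refine fun u hu => Int.le_induction
      (motive := fun u _ => ∀ ω, (zexp H u).mulVec (X u ω) =
        (zexp H (l - 1)).mulVec (X (l - 1) ω)
          + ∑ k ∈ Finset.Icc l u, (zexp H k).mulVec (G k ω - G (k - 1) ω))
      (m := l - 1) ?_ ?_ u hu
    · intro ω
      rw [show Finset.Icc l (l - 1) = ∅ from Finset.Icc_eq_empty (by omega),
        Finset.sum_empty, add_zero]
    · intro u hu ih ω
      have hins : Finset.Icc l (u + 1) = insert (u + 1) (Finset.Icc l u) := by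
        ext k; simp only [Finset.mem_Icc, Finset.mem_insert]; omega
      have hnotmem : (u + 1) ∉ Finset.Icc l u := by
        simp only [Finset.mem_Icc]; omega
      rw [hins, Finset.sum_insert hnotmem]
      have hx : X (u + 1) ω
          = (NormedSpace.exp (-H)).mulVec (X u ω) + (G (u + 1) ω - G u ω) := by
        have h := heq (u + 1) ω
        simp only [add_sub_cancel_right] at h
        have h2 : X (u + 1) ω = X u ω
            + ((NormedSpace.exp (-H) - 1).mulVec (X u ω) + (G (u + 1) ω - G u ω)) := by
          rw [← h]; abel
        rw [h2, Matrix.sub_mulVec, Matrix.one_mulVec]; abel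
      have hzz : zexp H (u + 1) * NormedSpace.exp (-H) = zexp H u := by
        have h1 : NormedSpace.exp (-H) = zexp H (-1) := by
          unfold zexp; norm_num
        rw [h1, ← zexp_add]
        norm_num
      rw [hx, Matrix.mulVec_add, Matrix.mulVec_mulVec, hzz, ih ω]
      simp only [add_sub_cancel_right]
      abel
  -- the deviation identity
  have hXY : ∀ (l u : ℤ), l - 1 ≤ u → ∀ ω,
      X u ω - Yproc H G l u ω
        = (zexp H (-u)).mulVec ((zexp H (l - 1)).mulVec (X (l - 1) ω)) := by
    intro l u hu ω
    have hinv : ∀ w : Fin n → ℝ, (zexp H (-u)).mulVec ((zexp H u).mulVec w) = w := by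
      intro w
      rw [Matrix.mulVec_mulVec, ← zexp_add, neg_add_cancel, zexp_zero, Matrix.one_mulVec]
    calc X u ω - Yproc H G l u ω
        = (zexp H (-u)).mulVec ((zexp H u).mulVec (X u ω)) - Yproc H G l u ω := by rw [hinv]
      _ = (zexp H (-u)).mulVec ((zexp H (l - 1)).mulVec (X (l - 1) ω)) := by
          rw [tele l u hu ω, Matrix.mulVec_add]
          unfold Yproc
          abel
  -- measurability of Y
  have hmY : ∀ l u, Measurable (Yproc H G l u) := by
    intro l u
    unfold Yproc
    exact (continuous_mulVec' _).measurable.comp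
      (Finset.measurable_sum _ (fun k _ => (continuous_mulVec' _).measurable.comp
        ((hmG k).sub (hmG (k - 1)))))
  -- convergence in measure of Y to X, jointly over a tuple of times
  have conv : ∀ t' : Fin m → ℤ,
      TendstoInMeasure μ (fun l ω (i : Fin m) => Yproc H G l (t' i) ω) atBot
        (fun ω i => X (t' i) ω) := by
    intro t'
    apply tendstoInMeasure_pi
    intro i
    obtain ⟨C, hC0, hC⟩ := exists_mulVec_bound (zexp H (-(t' i)))
    have hsub : Tendsto (fun l : ℤ => l - 1) atBot atBot := by
      simpa [sub_eq_add_neg] using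
        tendsto_atBot_add_const_right atBot (-1 : ℤ) (tendsto_id (α := ℤ))
    have hshift : TendstoInMeasure μ
        (fun l ω => (zexp H (l - 1)).mulVec (X (l - 1) ω)) atBot
        (fun _ => (0 : Fin n → ℝ)) :=
      tendstoInMeasure_comp hlim hsub
    refine tendstoInMeasure_of_dist_le hC0 ?_ hshift
    filter_upwards [eventually_le_atBot (t' i)] with l hl ω
    have hident := hXY l (t' i) (by omega) ω
    calc dist (Yproc H G l (t' i) ω) (X (t' i) ω)
        = ‖X (t' i) ω - Yproc H G l (t' i) ω‖ := by rw [dist_eq_norm, norm_sub_rev]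
      _ = ‖(zexp H (-(t' i))).mulVec ((zexp H (l - 1)).mulVec (X (l - 1) ω))‖ := by
          rw [hident]
      _ ≤ C * ‖(zexp H (l - 1)).mulVec (X (l - 1) ω)‖ := hC _
      _ = C * dist ((zexp H (l - 1)).mulVec (X (l - 1) ω)) 0 := by rw [dist_zero_right]
  -- equality of laws of the approximations
  have law : ∀ l : ℤ,
      μ.map (fun ω (i : Fin m) => Yproc H G (l + s) (t i + s) ω)
        = μ.map (fun ω (i : Fin m) => Yproc H G l (t i) ω) := by
    intro l
    set a : ℤ := l - 1 with ha
    have hne : (Finset.univ : Finset (Fin m)).Nonempty := Finset.univ_nonempty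
    set b : ℤ := Finset.univ.sup' hne t with hb
    have hbt : ∀ i, t i ≤ b := fun i => Finset.le_sup' t (Finset.mem_univ i)
    set K : ℕ := (b - a).toNat with hK
    have hτlt : ∀ k : ℤ, min (k - a).toNat K < K + 1 :=
      fun k => Nat.lt_succ_of_le (min_le_right _ _)
    set τ : Fin (K + 1) → ℤ := fun j => a + (j : ℤ) with hτ
    set idx : ℤ → Fin (K + 1) := fun k => ⟨min (k - a).toNat K, hτlt k⟩ with hidx
    have hτidx : ∀ k : ℤ, a ≤ k → k ≤ b → τ (idx k) = k := by
      intro k h1 h2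
      have hv : τ (idx k) = a + ((min (k - a).toNat K : ℕ) : ℤ) := rfl
      rw [hv]
      omega
    set Φ : (Fin (K + 1) → (Fin n → ℝ)) → (Fin m → (Fin n → ℝ)) := fun v i =>
      (zexp H (-(t i))).mulVec (∑ k ∈ Finset.Icc l (t i),
        (zexp H k).mulVec (v (idx k) - v (idx (k - 1)))) with hΦ
    have hΦc : Continuous Φ := by
      apply continuous_pi
      intro i
      exact (continuous_mulVec' _).comp (continuous_finset_sum _ fun k _ =>
        (continuous_mulVec' _).comp ((continuous_apply _).sub (continuous_apply _)))
    have hWs : Measurable (fun ω (j : Fin (K + 1)) => G (τ j + s) ω - G s ω) :=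
      measurable_pi_lambda _ fun j => (hmG _).sub (hmG s)
    have hW0 : Measurable (fun ω (j : Fin (K + 1)) => G (τ j) ω - G 0 ω) :=
      measurable_pi_lambda _ fun j => (hmG _).sub (hmG 0)
    have hA : (fun ω (i : Fin m) => Yproc H G l (t i) ω)
        = Φ ∘ (fun ω j => G (τ j) ω - G 0 ω) := by
      funext ω i
      simp only [hΦ, Function.comp_apply, Yproc]
      refine congrArg _ (Finset.sum_congr rfl fun k hk => ?_)
      rw [Finset.mem_Icc] at hk
      rw [hτidx k (by omega) (by have := hbt i; omega),
          hτidx (k - 1) (by omega) (by have := hbt i; omega)]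
      congr 1
      abel
    have hB : (fun ω (i : Fin m) => Yproc H G (l + s) (t i + s) ω)
        = Φ ∘ (fun ω j => G (τ j + s) ω - G s ω) := by
      funext ω i
      rw [Yproc_shift]
      simp only [hΦ, Function.comp_apply]
      refine congrArg _ (Finset.sum_congr rfl fun k hk => ?_)
      rw [Finset.mem_Icc] at hk
      rw [hτidx k (by omega) (by have := hbt i; omega),
          hτidx (k - 1) (by omega) (by have := hbt i; omega)]
      congr 1
      rw [show k - 1 + s = k + s - 1 from by ring]
      abel
    have hincs : μ.map (fun ω (j : Fin (K + 1)) => G (τ j + s) ω - G s ω)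
        = μ.map (fun ω (j : Fin (K + 1)) => G (τ j) ω - G 0 ω) := hGinc s (K + 1) τ
    calc μ.map (fun ω (i : Fin m) => Yproc H G (l + s) (t i + s) ω)
        = (μ.map (fun ω (j : Fin (K + 1)) => G (τ j + s) ω - G s ω)).map Φ := by
          rw [hB, ← Measure.map_map hΦc.measurable hWs]
      _ = (μ.map (fun ω (j : Fin (K + 1)) => G (τ j) ω - G 0 ω)).map Φ := by rw [hincs]
      _ = μ.map (fun ω (i : Fin m) => Yproc H G l (t i) ω) := by
          rw [hA]
          exact Measure.map_map hΦc.measurable hW0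
  -- pass to the limit along a sequence
  have hu : Tendsto (fun j : ℕ => -(j : ℤ)) atTop atBot :=
    tendsto_neg_atTop_atBot.comp tendsto_natCast_atTop_atTop
  have husum : Tendsto (fun j : ℕ => -(j : ℤ) + s) atTop atBot :=
    tendsto_atBot_add_const_right _ s hu
  have h1 : TendstoInMeasure μ
      (fun (j : ℕ) ω (i : Fin m) => Yproc H G (-(j : ℤ) + s) (t i + s) ω)
      atTop (fun ω i => X (t i + s) ω) :=
    tendstoInMeasure_comp (conv (fun i => t i + s)) husum
  have h2 : TendstoInMeasure μ
      (fun (j : ℕ) ω (i : Fin m) => Yproc H G (-(j : ℤ)) (t i) ω)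
      atTop (fun ω i => X (t i) ω) :=
    tendstoInMeasure_comp (conv t) hu
  have hlawj : ∀ j : ℕ, μ.map (fun ω (i : Fin m) => Yproc H G (-(j : ℤ) + s) (t i + s) ω)
      = μ.map (fun ω (i : Fin m) => Yproc H G (-(j : ℤ)) (t i) ω) := fun j => law _
  show μ.map (fun ω (i : Fin m) => X (t i + s) ω) = μ.map (fun ω (i : Fin m) => X (t i) ω)
  exact map_eq_of_tendstoInMeasure
    (fun j => (measurable_pi_lambda _ fun i => hmY _ _).aemeasurable)
    (fun j => (measurable_pi_lambda _ fun i => hmY _ _).aemeasurable)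
    ((measurable_pi_lambda _ fun i => hmX _).aemeasurable)
    ((measurable_pi_lambda _ fun i => hmX _).aemeasurable)
    hlawj h1 h2
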